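/- arXiv:2107.14117 — 2 statements merged into one kernel-verified Lean document; each statement's English description precedes it below -/
import Mathlib

section
/- If a function f : ℝ² → ℝ is exponential along every line (i.e., its restriction to every affine line t ↦ f(p + t·v) has the form t ↦ C·exp(λt) for some constants C, λ depending on the line), and f is smooth and positive, then f(x,y) = exp(a·x + b·y + c) for some real constants a, b, c. -/
/-- A smooth positive function on ℝ² that is exponential along every
affine line (i.e. `t ↦ f (p + t • v)` equals `t ↦ C * exp (λ t)` for constants
`C > 0`, `λ` depending on the line) is of the form `f (x, y) = exp (a x + b y + c)`. -/
theorem exponential_along_lines_two_dim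
    (f : ℝ × ℝ → ℝ)
    (hsmooth : ContDiff ℝ (⊤ : ℕ∞) f)
    (hpos : ∀ p, 0 < f p)
    (hline : ∀ p v : ℝ × ℝ, ∃ C lam : ℝ, 0 < C ∧
      ∀ t : ℝ, f (p + t • v) = C * Real.exp (lam * t)) :
    ∃ a b c : ℝ, ∀ x y : ℝ, f (x, y) = Real.exp (a * x + b * y + c) := by
  have key : ∀ p v : ℝ × ℝ, ∀ t : ℝ,
      Real.log (f (p + t • v)) =
        Real.log (f p) + t * (Real.log (f (p + v)) - Real.log (f p)) := by
    intro p v t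
    obtain ⟨C, lam, hC, h⟩ := hline p v
    have lC : Real.log (f (p + t • v)) = Real.log C + lam * t := by
      rw [h t, Real.log_mul hC.ne' (Real.exp_pos _).ne', Real.log_exp]
    have lp : Real.log (f p) = Real.log C := by
      have := h 0; simp at this; rw [this]
    have lpv : Real.log (f (p + v)) = Real.log C + lam := by
      have := h 1; simp at this
      rw [this, Real.log_mul hC.ne' (Real.exp_pos _).ne', Real.log_exp]
    rw [lC, lp, lpv]; ring
  set L0 : ℝ := Real.log (f (0, 0)) with hL0
  refine ⟨Real.log (f (1, 0)) - L0, Real.log (f (0, 1)) - L0, L0, fun x y => ?_⟩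
  have hhom : ∀ (p : ℝ × ℝ) (t : ℝ),
      Real.log (f (t • p)) = L0 + t * (Real.log (f p) - L0) := by
    intro p t
    have := key (0, 0) p t
    simp only [show ((0, 0) : ℝ × ℝ) + p = p from zero_add p,
      show ((0, 0) : ℝ × ℝ) + t • p = t • p from zero_add _] at this
    exact this
  have hx : Real.log (f (x, 0)) = L0 + x * (Real.log (f (1, 0)) - L0) := by
    have := hhom (1, 0) x
    simpa [Prod.smul_mk] using this
  have hy : Real.log (f (0, y)) = L0 + y * (Real.log (f (0, 1)) - L0) := by
    have := hhom (0, 1) y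
    simpa [Prod.smul_mk] using this
  have hmid : Real.log (f (x / 2, y / 2)) =
      Real.log (f (x, 0)) + (1 / 2 : ℝ) * (Real.log (f (0, y)) - Real.log (f (x, 0))) := by
    have := key (x, 0) ((0, y) - (x, 0)) (1 / 2)
    have hpt : ((x, 0) : ℝ × ℝ) + (1 / 2 : ℝ) • (((0, y) : ℝ × ℝ) - (x, 0)) = (x / 2, y / 2) := by
      simp [Prod.ext_iff]; constructor <;> ring
    have hpt2 : ((x, 0) : ℝ × ℝ) + (((0, y) : ℝ × ℝ) - (x, 0)) = (0, y) := by
      simp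
    rw [hpt, hpt2] at this
    exact this
  have hfull : Real.log (f (x, y)) = L0 + 2 * (Real.log (f (x / 2, y / 2)) - L0) := by
    have := hhom (x / 2, y / 2) 2
    have hpt : (2 : ℝ) • ((x / 2, y / 2) : ℝ × ℝ) = (x, y) := by
      simp [Prod.ext_iff]; constructor <;> ring
    rw [hpt] at this
    exact this
  have : Real.log (f (x, y)) =
      (Real.log (f (1, 0)) - L0) * x + (Real.log (f (0, 1)) - L0) * y + L0 := by
    rw [hfull, hmid, hx, hy]; ring
  calc f (x, y) = Real.exp (Real.log (f (x, y))) := (Real.exp_log (hpos _)).symm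
    _ = _ := by rw [this]
end

section
/- If a function f : ℝⁿ → ℝ is smooth, positive, and exponential along every affine line, then there exist a ∈ ℝⁿ and b ∈ ℝ such that f(x) = exp(⟨a, x⟩ + b) for all x. -/
/-- A smooth positive function on ℝⁿ that is exponential along every
affine line is of the form `x ↦ exp (⟨a, x⟩ + b)`. -/
theorem exponential_along_lines
    (n : ℕ) (f : EuclideanSpace ℝ (Fin n) → ℝ)
    (hsmooth : ContDiff ℝ (⊤ : ℕ∞) f)
    (hpos : ∀ x, 0 < f x)
    (hline : ∀ p v : EuclideanSpace ℝ (Fin n), ∃ C lam : ℝ, 0 < C ∧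
      ∀ t : ℝ, f (p + t • v) = C * Real.exp (lam * t)) :
    ∃ (a : EuclideanSpace ℝ (Fin n)) (b : ℝ), ∀ x,
      f x = Real.exp ((inner ℝ a x : ℝ) + b) := by
  set g : EuclideanSpace ℝ (Fin n) → ℝ := fun x => Real.log (f x) with hg
  have key : ∀ p v : EuclideanSpace ℝ (Fin n), ∀ t : ℝ,
      g (p + t • v) = g p + t * (g (p + v) - g p) := by
    intro p v t
    obtain ⟨C, lam, hC, hCl⟩ := hline p v
    have hlog : ∀ s : ℝ, g (p + s • v) = Real.log C + lam * s := by
      intro s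
      simp only [hg, hCl s, Real.log_mul hC.ne' (Real.exp_pos _).ne', Real.log_exp]
    have h0 : g p = Real.log C := by
      have := hlog 0; simpa using this
    have h1 : g (p + v) = Real.log C + lam := by
      have := hlog 1; simpa using this
    rw [hlog t, h0, h1]; ring
  have hhom : ∀ (t : ℝ) (x : EuclideanSpace ℝ (Fin n)),
      g (t • x) - g 0 = t * (g x - g 0) := by
    intro t x
    have h := key 0 x t
    simp only [zero_add] at h
    linarith
  have hadd : ∀ x y : EuclideanSpace ℝ (Fin n),
      g (x + y) - g 0 = (g x - g 0) + (g y - g 0) := by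
    intro x y
    have h1 : g (x + (1/2 : ℝ) • (y - x)) = g x + (1/2) * (g (x + (y - x)) - g x) :=
      key x (y - x) (1/2)
    have he : x + (1/2 : ℝ) • (y - x) = (1/2 : ℝ) • (x + y) := by
      module
    have he2 : x + (y - x) = y := by abel
    rw [he, he2] at h1
    have h2 : g ((1/2 : ℝ) • (x + y)) - g 0 = (1/2) * (g (x + y) - g 0) := hhom _ _
    linarith
  let L : EuclideanSpace ℝ (Fin n) →ₗ[ℝ] ℝ :=
    { toFun := fun x => g x - g 0
      map_add' := hadd
      map_smul' := fun t x => by simpa using hhom t x }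
  let a : EuclideanSpace ℝ (Fin n) :=
    (InnerProductSpace.toDual ℝ _).symm L.toContinuousLinearMap
  refine ⟨a, g 0, fun x => ?_⟩
  have hinner : (inner ℝ a x : ℝ) = g x - g 0 := by
    have h : (inner ℝ a x : ℝ) = L.toContinuousLinearMap x :=
      InnerProductSpace.toDual_symm_apply
    exact h
  rw [hinner, sub_add_cancel]
  have : g x = Real.log (f x) := by rw [hg]
  rw [this]
  exact (Real.exp_log (hpos x)).symm
end
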